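/- Let G be a countable torsion-free (discrete) abelian group and let m ≥ 1. Then the abelian group SML_m(G, ℝ/ℤ) of symmetric multilinear maps from G^m to the circle group ℝ/ℤ is divisible. -/

import Mathlib

/-- `b : G^m → H` is multilinear if it is a group homomorphism in each coordinate. -/
def IsMultilinear {G H : Type*} [AddCommGroup G] [AddCommGroup H] {m : ℕ}
    (b : (Fin m → G) → H) : Prop :=
  ∀ (i : Fin m) (g : Fin m → G) (x y : G),
    b (Function.update g i (x + y)) = b (Function.update g i x) + b (Function.update g i y)

/-- `b : G^m → H` is symmetric if it is invariant under all permutations of its arguments. -/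
def IsSymmetric {G H : Type*} {m : ℕ} (b : (Fin m → G) → H) : Prop :=
  ∀ (σ : Equiv.Perm (Fin m)) (g : Fin m → G), b (g ∘ σ) = b g

open Finsupp Function MvPolynomial

namespace SMLAux

variable (G : Type*) [AddCommGroup G] (m : ℕ)

/-- Relators for the symmetric power construction. -/
noncomputable def relSet : Set ((Fin m → G) →₀ ℤ) :=
  {z | (∃ (i : Fin m) (g : Fin m → G) (x y : G),
          z = single (update g i (x + y)) 1 - single (update g i x) 1
              - single (update g i y) 1) ∨
       (∃ (σ : Equiv.Perm (Fin m)) (g : Fin m → G),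
          z = single (g ∘ σ) 1 - single g 1)}

noncomputable def rel : Submodule ℤ ((Fin m → G) →₀ ℤ) := Submodule.span ℤ (relSet G m)

abbrev A := ((Fin m → G) →₀ ℤ) ⧸ rel G m

noncomputable def e (g : Fin m → G) : A G m := Submodule.Quotient.mk (single g 1)

variable {G m}

theorem e_ml (i : Fin m) (g : Fin m → G) (x y : G) :
    e G m (update g i (x + y)) = e G m (update g i x) + e G m (update g i y) := by
  have : e G m (update g i (x+y)) - (e G m (update g i x) + e G m (update g i y)) = 0 := by
    show Submodule.Quotient.mk _ - (Submodule.Quotient.mk _ + Submodule.Quotient.mk _) = 0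
    rw [← Submodule.Quotient.mk_add, ← Submodule.Quotient.mk_sub,
      Submodule.Quotient.mk_eq_zero]
    refine Submodule.subset_span (Or.inl ⟨i, g, x, y, ?_⟩)
    abel
  linear_combination (norm := abel) this

theorem e_sym (σ : Equiv.Perm (Fin m)) (g : Fin m → G) : e G m (g ∘ σ) = e G m g := by
  have : e G m (g ∘ σ) - e G m g = 0 := by
    show Submodule.Quotient.mk _ - Submodule.Quotient.mk _ = 0
    rw [← Submodule.Quotient.mk_sub, Submodule.Quotient.mk_eq_zero]
    exact Submodule.subset_span (Or.inr ⟨σ, g, rfl⟩)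
  linear_combination (norm := abel) this

/-- `x ↦ e (update g i x)` as an additive monoid hom. -/
noncomputable def updE (g : Fin m → G) (i : Fin m) : G →+ A G m :=
  AddMonoidHom.mk' (fun x => e G m (update g i x)) (fun x y => e_ml i g x y)

@[simp] theorem updE_apply (g : Fin m → G) (i : Fin m) (x : G) :
    updE g i x = e G m (update g i x) := rfl

theorem e_span : Submodule.span ℤ (Set.range (e G m)) = ⊤ := by
  rw [eq_top_iff]
  rintro x -
  obtain ⟨y, rfl⟩ := Submodule.Quotient.mk_surjective _ x
  induction y using Finsupp.induction with
  | zero => simp [Submodule.zero_mem]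
  | single_add a b f _ _ ih =>
    rw [Submodule.Quotient.mk_add]
    refine Submodule.add_mem _ ?_ ih
    have : Finsupp.single a b = b • Finsupp.single a (1:ℤ) := by
      rw [Finsupp.smul_single, smul_eq_mul, mul_one]
    rw [this, Submodule.Quotient.mk_smul]
    exact Submodule.smul_mem _ _ (Submodule.subset_span ⟨a, rfl⟩)

/-- exponent multiset of a tuple -/
noncomputable def μ (t : Fin m → Fin r) : Fin r →₀ ℕ := ∑ j, Finsupp.single (t j) 1

theorem count_ofFn (s : Fin m → Fin r) (i : Fin r) : (List.ofFn s).count i = μ s i := by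
  have h1 : ((List.ofFn s : List (Fin r)) : Multiset (Fin r)) = Finset.univ.val.map s :=
    (Fin.univ_val_map s).symm
  have h2 : (List.ofFn s).count i = Multiset.count i (Finset.univ.val.map s) := by
    rw [← h1, Multiset.coe_count]
  rw [h2, Multiset.count_map]
  rw [μ, Finsupp.finset_sum_apply]
  simp only [Finsupp.single_apply]
  rw [Finset.sum_boole]
  rw [Nat.cast_id]
  rw [Finset.card_def, Finset.filter_val]
  congr 1
  apply Multiset.filter_congr
  intro a _
  exact ⟨Eq.symm, Eq.symm⟩

theorem μ_inj {t t' : Fin m → Fin r} (ht : Monotone t) (ht' : Monotone t')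
    (h : μ t = μ t') : t = t' := by
  have hcount : ∀ i, (List.ofFn t).count i = (List.ofFn t').count i := by
    intro i; rw [count_ofFn, count_ofFn, h]
  have hperm : (List.ofFn t).Perm (List.ofFn t') := List.perm_iff_count.mpr hcount
  exact List.ofFn_injective (List.Perm.eq_of_sortedLE ht.sortedLE_ofFn ht'.sortedLE_ofFn hperm)


section Free

variable {r : ℕ} (bs : Module.Basis (Fin r) ℤ G)

noncomputable def lin : G →ₗ[ℤ] MvPolynomial (Fin r) ℤ :=
  (Finsupp.linearCombination ℤ (fun i => (X i : MvPolynomial (Fin r) ℤ))) ∘ₗ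
    (bs.repr : G ≃ₗ[ℤ] (Fin r →₀ ℤ)).toLinearMap

theorem lin_basis (i0 : Fin r) : lin bs (bs i0) = X i0 := by
  simp [lin]

noncomputable def Phi : (Fin m → G) → MvPolynomial (Fin r) ℤ := fun g => ∏ j, lin bs (g j)

theorem Phi_update (g : Fin m → G) (i : Fin m) (z : G) :
    Phi bs (update g i z) = lin bs z * ∏ j ∈ Finset.univ \ {i}, lin bs (g j) := by
  unfold Phi
  have h : (fun j => lin bs (update g i z j)) = update (fun j => lin bs (g j)) i (lin bs z) := by
    funext j; by_cases hj : j = i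
    · subst hj; simp
    · simp [Function.update_of_ne hj]
  rw [h, Finset.prod_update_of_mem (Finset.mem_univ i)]

noncomputable def phi0 : ((Fin m → G) →₀ ℤ) →ₗ[ℤ] MvPolynomial (Fin r) ℤ :=
  Finsupp.linearCombination ℤ (Phi bs)

theorem rel_le_ker : rel G m ≤ LinearMap.ker (phi0 (m := m) bs) := by
  rw [rel, Submodule.span_le]
  rintro z (⟨i, g, x, y, rfl⟩ | ⟨σ, g, rfl⟩) <;>
    simp only [SetLike.mem_coe, LinearMap.mem_ker, map_sub, phi0,
      Finsupp.linearCombination_single, one_smul]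
  · rw [Phi_update, Phi_update, Phi_update, map_add, add_mul]; ring
  · rw [sub_eq_zero]
    exact Equiv.prod_comp σ (fun j => lin bs (g j))

noncomputable def phi : A G m →ₗ[ℤ] MvPolynomial (Fin r) ℤ :=
  Submodule.liftQ _ (phi0 bs) (rel_le_ker bs)

theorem phi_e (g : Fin m → G) : phi bs (e G m g) = Phi bs g := by
  show phi bs (Submodule.Quotient.mk _) = _
  rw [phi, Submodule.liftQ_apply, phi0, Finsupp.linearCombination_single, one_smul]

noncomputable def El (t : {t : Fin m → Fin r // Monotone t}) : A G m := e G m (bs ∘ t.1)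

theorem phi_El (t : {t : Fin m → Fin r // Monotone t}) :
    phi bs (El bs t) = monomial (μ t.1) (1 : ℤ) := by
  rw [El, phi_e]
  unfold Phi μ
  have key : ∀ s : Finset (Fin m), ∏ j ∈ s, lin bs ((bs ∘ t.1) j)
      = monomial (∑ j ∈ s, Finsupp.single (t.1 j) 1) (1 : ℤ) := by
    intro s
    induction s using Finset.induction with
    | empty => simp
    | insert _ _ hns ih =>
      rw [Finset.prod_insert hns, Finset.sum_insert hns, ih, comp_apply, lin_basis,
        X, monomial_mul, one_mul]
  exact key Finset.univ

theorem mem_span_El (k : ℕ) (g : Fin m → G)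
    (hg : ∀ j : Fin m, k ≤ (j : ℕ) → g j ∈ Set.range bs) :
    e G m g ∈ Submodule.span ℤ (Set.range (El (m := m) bs)) := by
  induction k generalizing g with
  | zero =>
    choose t ht using fun j => hg j (Nat.zero_le _)
    have hmono : Monotone (t ∘ Tuple.sort t) := Tuple.monotone_sort t
    have heq : e G m g = El bs ⟨t ∘ Tuple.sort t, hmono⟩ := by
      rw [← e_sym (Tuple.sort t) g, El]
      congr 1
      funext j
      simp [ht]
    rw [heq]
    exact Submodule.subset_span ⟨_, rfl⟩
  | succ k ih =>
    by_cases hk : k < m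
    · set i : Fin m := ⟨k, hk⟩ with hi
      have hgi : g i ∈ Submodule.span ℤ (Set.range bs) := by rw [bs.span_eq]; trivial
      have key : ∀ x, x ∈ Submodule.span ℤ (Set.range bs) →
          e G m (update g i x) ∈ Submodule.span ℤ (Set.range (El (m := m) bs)) := by
        intro x hx
        induction hx using Submodule.span_induction with
        | mem x hxr =>
          refine ih (update g i x) (fun j hj => ?_)
          by_cases hji : j = i
          · subst hji; simpa using hxr
          · rw [update_of_ne hji]
            refine hg j ?_
            have hne : (j : ℕ) ≠ k := fun hc => hji (Fin.ext hc)
            omega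
        | zero =>
          have h0 : e G m (update g i 0) = 0 := by
            simpa using (updE g i).map_zero
          rw [h0]; exact Submodule.zero_mem _
        | add x y hx hy ihx ihy =>
          rw [e_ml i g x y]
          exact Submodule.add_mem _ ihx ihy
        | smul c x hx ihx =>
          have hs : e G m (update g i (c • x)) = c • e G m (update g i x) := by
            simpa using (updE g i).map_zsmul c x
          rw [hs]
          exact Submodule.smul_mem _ _ ihx
      have := key (g i) hgi
      rwa [update_eq_self] at this
    · refine ih g (fun j hj => ?_)
      exact absurd (lt_of_lt_of_le j.isLt (le_of_not_gt hk)) (by omega)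

theorem span_El : Submodule.span ℤ (Set.range (El (m := m) bs)) = ⊤ := by
  rw [eq_top_iff, ← e_span]
  rw [Submodule.span_le]
  rintro x ⟨g, rfl⟩
  exact mem_span_El bs m g (fun j hj => absurd j.isLt (by omega))

include bs in
theorem torsionFree_of_basis (c : ℤ) (hc : c ≠ 0) (a : A G m) (h : c • a = 0) : a = 0 := by
  have ha : a ∈ Submodule.span ℤ (Set.range (El (m := m) bs)) := by
    rw [span_El]; trivial
  rw [Finsupp.mem_span_range_iff_exists_finsupp] at ha
  obtain ⟨w, rfl⟩ := ha
  have hphi : phi bs (w.sum fun t c => c • El bs t) = 0 := by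
    have h2 : c • phi bs (w.sum fun t c => c • El bs t) = 0 := by
      rw [← map_zsmul, h, map_zero]
    rw [smul_eq_C_mul] at h2
    rcases mul_eq_zero.mp h2 with h1 | h1
    · exact absurd (MvPolynomial.C_injective _ _ (h1.trans (map_zero MvPolynomial.C).symm)) hc
    · exact h1
  have li : LinearIndependent ℤ (fun t : {t : Fin m → Fin r // Monotone t} =>
      (monomial (μ t.1) (1 : ℤ) : MvPolynomial (Fin r) ℤ)) := by
    have h1 : (fun t : {t : Fin m → Fin r // Monotone t} =>
        (monomial (μ t.1) (1 : ℤ) : MvPolynomial (Fin r) ℤ))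
        = (basisMonomials (Fin r) ℤ) ∘ (fun t => μ t.1) := by
      funext t; rw [comp_apply, coe_basisMonomials]
    rw [h1]
    refine (basisMonomials (Fin r) ℤ).linearIndependent.comp _ ?_
    intro t t' htt
    exact Subtype.ext (μ_inj t.2 t'.2 htt)
  have hw : w = 0 := by
    refine linearIndependent_iff.mp li w ?_
    rw [Finsupp.linearCombination_apply]
    rw [map_finsuppSum] at hphi
    rw [← hphi]
    refine Finsupp.sum_congr (fun t _ => ?_)
    rw [map_zsmul, phi_El]
  rw [hw, Finsupp.sum_zero_index]

end Free


section Transfer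

variable {G : Type*} [AddCommGroup G] {m : ℕ}

/-- Relators whose data lies in a submodule `H`. -/
def relSetIn (H : Submodule ℤ G) : Set ((Fin m → G) →₀ ℤ) :=
  {z | (∃ (i : Fin m) (g : Fin m → G) (x y : G), (∀ j, g j ∈ H) ∧ x ∈ H ∧ y ∈ H ∧
          z = single (update g i (x + y)) 1 - single (update g i x) 1
              - single (update g i y) 1) ∨
       (∃ (σ : Equiv.Perm (Fin m)) (g : Fin m → G), (∀ j, g j ∈ H) ∧
          z = single (g ∘ σ) 1 - single g 1)}

theorem relSetIn_mono {H H' : Submodule ℤ G} (hHH : H ≤ H') :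
    relSetIn (m := m) H ⊆ relSetIn H' := by
  rintro z (⟨i, g, x, y, hg, hx, hy, rfl⟩ | ⟨σ, g, hg, rfl⟩)
  · exact Or.inl ⟨i, g, x, y, fun j => hHH (hg j), hHH hx, hHH hy, rfl⟩
  · exact Or.inr ⟨σ, g, fun j => hHH (hg j), rfl⟩

theorem relSet_eq_iUnion :
    relSet G m = ⋃ (H : {H : Submodule ℤ G // H.FG}), relSetIn (m := m) H.1 := by
  apply le_antisymm
  · rintro z (⟨i, g, x, y, rfl⟩ | ⟨σ, g, rfl⟩)
    · have hfin : (Set.range g ∪ {x, y}).Finite :=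
        (Set.finite_range g).union (Set.toFinite {x, y})
      refine Set.mem_iUnion.mpr ⟨⟨Submodule.span ℤ (Set.range g ∪ {x, y}),
        Submodule.fg_span hfin⟩, Or.inl ⟨i, g, x, y, ?_, ?_, ?_, rfl⟩⟩
      · exact fun j => Submodule.subset_span (Or.inl ⟨j, rfl⟩)
      · exact Submodule.subset_span (Or.inr (Or.inl rfl))
      · exact Submodule.subset_span (Or.inr (Or.inr rfl))
    · refine Set.mem_iUnion.mpr ⟨⟨Submodule.span ℤ (Set.range g),
        Submodule.fg_span (Set.finite_range g)⟩, Or.inr ⟨σ, g, ?_, rfl⟩⟩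
      exact fun j => Submodule.subset_span ⟨j, rfl⟩
  · refine Set.iUnion_subset (fun H => ?_)
    rintro z (⟨i, g, x, y, _, _, _, rfl⟩ | ⟨σ, g, _, rfl⟩)
    · exact Or.inl ⟨i, g, x, y, rfl⟩
    · exact Or.inr ⟨σ, g, rfl⟩

variable (m) in
/-- The map on finsupps induced by the inclusion of a submodule. -/
noncomputable def jmap (H : Submodule ℤ G) :
    ((Fin m → ↥H) →₀ ℤ) →ₗ[ℤ] ((Fin m → G) →₀ ℤ) :=
  Finsupp.lmapDomain ℤ ℤ (fun w => ((↑) : ↥H → G) ∘ w)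

theorem jmap_injective (H : Submodule ℤ G) : Function.Injective (jmap m H) := by
  refine Finsupp.mapDomain_injective (fun w w' hww => ?_)
  funext j
  exact Subtype.ext (congrFun hww j)

theorem jmap_single (H : Submodule ℤ G) (w : Fin m → ↥H) (c : ℤ) :
    jmap m H (single w c) = single (((↑) : ↥H → G) ∘ w) c :=
  Finsupp.mapDomain_single

theorem jmap_relSet (H : Submodule ℤ G) :
    jmap m H '' relSet ↥H m ⊆ relSet G m := by
  rintro _ ⟨z, ⟨i, g, x, y, rfl⟩ | ⟨σ, g, rfl⟩, rfl⟩
  · refine Or.inl ⟨i, ((↑) : ↥H → G) ∘ g, ↑x, ↑y, ?_⟩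
    rw [map_sub, map_sub, jmap_single, jmap_single, jmap_single,
      comp_update, comp_update, comp_update]
    norm_cast
  · refine Or.inr ⟨σ, ((↑) : ↥H → G) ∘ g, ?_⟩
    rw [map_sub, jmap_single, jmap_single]
    rfl

theorem relSetIn_subset_image (H : Submodule ℤ G) :
    relSetIn (m := m) H ⊆ jmap m H '' relSet ↥H m := by
  rintro z (⟨i, g, x, y, hg, hx, hy, rfl⟩ | ⟨σ, g, hg, rfl⟩)
  · refine ⟨single (update (fun j => (⟨g j, hg j⟩ : ↥H)) i (⟨x, hx⟩ + ⟨y, hy⟩)) 1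
      - single (update (fun j => (⟨g j, hg j⟩ : ↥H)) i ⟨x, hx⟩) 1
      - single (update (fun j => (⟨g j, hg j⟩ : ↥H)) i ⟨y, hy⟩) 1,
      Or.inl ⟨i, _, _, _, rfl⟩, ?_⟩
    rw [map_sub, map_sub, jmap_single, jmap_single, jmap_single,
      comp_update, comp_update, comp_update]
    have hcg : ((↑) : ↥H → G) ∘ (fun j => (⟨g j, hg j⟩ : ↥H)) = g := rfl
    rw [hcg]
    rfl
  · refine ⟨single ((fun j => (⟨g j, hg j⟩ : ↥H)) ∘ σ) 1
      - single (fun j => (⟨g j, hg j⟩ : ↥H)) 1, Or.inr ⟨σ, _, rfl⟩, ?_⟩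
    rw [map_sub, jmap_single, jmap_single]
    rfl

theorem exists_jmap_preimage (H : Submodule ℤ G) (x : (Fin m → G) →₀ ℤ)
    (hx : ∀ w ∈ x.support, ∀ j, w j ∈ H) : ∃ x', jmap m H x' = x := by
  induction x using Finsupp.induction with
  | zero => exact ⟨0, map_zero _⟩
  | single_add a b f ha hb ih =>
    have hsum : ∀ w, w ∈ f.support → (single a b + f) w = f w := by
      intro w hw
      have hwa : w ≠ a := fun hc => ha (hc ▸ hw)
      rw [Finsupp.add_apply, Finsupp.single_eq_of_ne hwa, zero_add]
    have hf : ∀ w ∈ f.support, ∀ j, w j ∈ H := by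
      intro w hw j
      refine hx w ?_ j
      rw [Finsupp.mem_support_iff, hsum w hw]
      exact Finsupp.mem_support_iff.mp hw
    have hamem : ∀ j, a j ∈ H := by
      intro j
      refine hx a ?_ j
      rw [Finsupp.mem_support_iff, Finsupp.add_apply,
        Finsupp.notMem_support_iff.mp ha, add_zero, Finsupp.single_eq_same]
      exact hb
    obtain ⟨f', hf'⟩ := ih hf
    refine ⟨single (fun j => (⟨a j, hamem j⟩ : ↥H)) b + f', ?_⟩
    rw [map_add, jmap_single, hf']
    rfl

theorem torsionFree [NoZeroSMulDivisors ℤ G] (c : ℤ) (hc : c ≠ 0) (a : A G m)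
    (h : c • a = 0) : a = 0 := by
  obtain ⟨x, rfl⟩ := Submodule.Quotient.mk_surjective _ a
  rw [← Submodule.Quotient.mk_smul, Submodule.Quotient.mk_eq_zero] at h
  have hrel : rel G m = ⨆ (H : {H : Submodule ℤ G // H.FG}),
      Submodule.span ℤ (relSetIn (m := m) H.1) := by
    rw [rel, relSet_eq_iUnion, Submodule.span_iUnion]
  rw [hrel] at h
  haveI : Nonempty {H : Submodule ℤ G // H.FG} := ⟨⟨⊥, Submodule.fg_bot⟩⟩
  have hdir : Directed (· ≤ ·) (fun H : {H : Submodule ℤ G // H.FG} =>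
      Submodule.span ℤ (relSetIn (m := m) H.1)) := by
    intro H H'
    exact ⟨⟨H.1 ⊔ H'.1, Submodule.FG.sup H.2 H'.2⟩,
      Submodule.span_mono (relSetIn_mono le_sup_left),
      Submodule.span_mono (relSetIn_mono le_sup_right)⟩
  rw [Submodule.mem_iSup_of_directed _ hdir] at h
  obtain ⟨⟨H0, hH0⟩, hmem⟩ := h
  classical
  set coords : Finset G := x.support.biUnion (fun w => Finset.image w Finset.univ) with hcoords
  set H : Submodule ℤ G := H0 ⊔ Submodule.span ℤ (coords : Set G) with hH
  have hHfg : H.FG := Submodule.FG.sup hH0 (Submodule.fg_span (coords.finite_toSet))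
  have hmem' : c • x ∈ Submodule.span ℤ (relSetIn (m := m) H) :=
    Submodule.span_mono (relSetIn_mono le_sup_left) hmem
  have hxsupp : ∀ w ∈ x.support, ∀ j, w j ∈ H := by
    intro w hw j
    refine Submodule.mem_sup_right (Submodule.subset_span ?_)
    exact Finset.mem_coe.mpr (Finset.mem_biUnion.mpr ⟨w, hw, Finset.mem_image_of_mem w
      (Finset.mem_univ j)⟩)
  obtain ⟨x', hx'⟩ := exists_jmap_preimage H x hxsupp
  haveI : Module.Finite ℤ ↥H := Module.Finite.iff_fg.mpr hHfg
  haveI : Module.Free ℤ ↥H := Module.free_of_finite_type_torsion_free'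
  let bs := (Module.Free.chooseBasis ℤ ↥H).reindex
    (Fintype.equivFin (Module.Free.ChooseBasisIndex ℤ ↥H))
  have h2 : c • x ∈ Submodule.map (jmap m H) (rel ↥H m) := by
    rw [rel, Submodule.map_span]
    exact Submodule.span_mono (relSetIn_subset_image H) hmem'
  obtain ⟨y, hy, hyx⟩ := h2
  have hycx : y = c • x' := by
    refine jmap_injective H ?_
    rw [hyx, map_smul, hx']
  have h3 : c • x' ∈ rel ↥H m := hycx ▸ hy
  have h4 : (Submodule.Quotient.mk x' : A ↥H m) = 0 := by
    refine torsionFree_of_basis bs c hc _ ?_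
    rw [← Submodule.Quotient.mk_smul, Submodule.Quotient.mk_eq_zero]
    exact h3
  rw [Submodule.Quotient.mk_eq_zero] at h4
  rw [Submodule.Quotient.mk_eq_zero, ← hx']
  have h5 : jmap m H x' ∈ Submodule.map (jmap m H) (rel ↥H m) :=
    Submodule.mem_map_of_mem h4
  have h6 : Submodule.map (jmap m H) (rel ↥H m) ≤ rel G m := by
    rw [rel, Submodule.map_span, rel]
    exact Submodule.span_mono (jmap_relSet H)
  exact h6 h5

end Transfer

section Descend

variable {G : Type*} [AddCommGroup G] {m : ℕ} {Q : Type*} [AddCommGroup Q]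

noncomputable def descend (b : (Fin m → G) → Q) (hml : IsMultilinear b) (hsym : IsSymmetric b) :
    A G m →ₗ[ℤ] Q := by
  refine Submodule.liftQ _ (Finsupp.linearCombination ℤ b) ?_
  rw [rel, Submodule.span_le]
  rintro z (⟨i, g, x, y, rfl⟩ | ⟨σ, g, rfl⟩) <;>
    simp only [SetLike.mem_coe, LinearMap.mem_ker, map_sub,
      Finsupp.linearCombination_single, one_smul]
  · rw [hml i g x y]; abel
  · rw [hsym σ g, sub_self]

theorem descend_e (b : (Fin m → G) → Q) (hml : IsMultilinear b) (hsym : IsSymmetric b)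
    (g : Fin m → G) : descend b hml hsym (e G m g) = b g := by
  show descend b hml hsym (Submodule.Quotient.mk _) = _
  rw [descend, Submodule.liftQ_apply, Finsupp.linearCombination_single, one_smul]

end Descend

end SMLAux

/-- For `G` a countable torsion-free abelian group and `m ≥ 1`, the group
`SML_m(G, ℝ/ℤ)` of symmetric multilinear maps `G^m → ℝ/ℤ` is divisible. -/
theorem sml_torsionFree_divisible {G : Type*} [AddCommGroup G] [Countable G]
    (hG : ∀ (n : ℤ) (g : G), n ≠ 0 → g ≠ 0 → n • g ≠ 0)
    (m : ℕ) (hm : 1 ≤ m)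
    (b : (Fin m → G) → AddCircle (1 : ℝ)) (hml : IsMultilinear b) (hsym : IsSymmetric b)
    (n : ℕ) (hn : 1 ≤ n) :
    ∃ b' : (Fin m → G) → AddCircle (1 : ℝ),
      IsMultilinear b' ∧ IsSymmetric b' ∧ n • b' = b := by
  classical
  haveI : NoZeroSMulDivisors ℤ G := by
    refine ⟨fun {c g} h => ?_⟩
    by_contra hc
    push_neg at hc
    exact hG c g hc.1 hc.2 h
  set f := SMLAux.descend b hml hsym with hf
  set L : SMLAux.A G m →ₗ[ℤ] SMLAux.A G m := (n : ℤ) • LinearMap.id with hLdef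
  have hnz : (n : ℤ) ≠ 0 := by exact_mod_cast Nat.one_le_iff_ne_zero.mp hn
  have hL : Function.Injective L := by
    intro a a' haa
    have h1 : (n : ℤ) • (a - a') = 0 := by
      rw [smul_sub]
      have : L a = L a' := haa
      simp only [hLdef, LinearMap.smul_apply, LinearMap.id_apply] at this
      rw [this, sub_self]
    exact sub_eq_zero.mp (SMLAux.torsionFree (n : ℤ) hnz _ h1)
  obtain ⟨h, hh⟩ := (Module.Baer.of_divisible (AddCircle (1 : ℝ))).extension_property L hL f
  refine ⟨fun g => h (SMLAux.e G m g), ?_, ?_, ?_⟩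
  · intro i g x y
    show h (SMLAux.e G m (Function.update g i (x + y)))
      = h (SMLAux.e G m (Function.update g i x)) + h (SMLAux.e G m (Function.update g i y))
    rw [SMLAux.e_ml i g x y, map_add]
  · intro σ g
    show h (SMLAux.e G m (g ∘ σ)) = h (SMLAux.e G m g)
    rw [SMLAux.e_sym σ g]
  · funext g
    have hp : (n • fun g => h (SMLAux.e G m g)) g = n • h (SMLAux.e G m g) := rfl
    rw [hp, ← natCast_zsmul, ← map_zsmul h]
    have hLe : (n : ℤ) • SMLAux.e G m g = L (SMLAux.e G m g) := by
      simp [hLdef]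
    rw [hLe]
    have := LinearMap.congr_fun hh (SMLAux.e G m g)
    rw [LinearMap.comp_apply] at this
    rw [this, hf, SMLAux.descend_e]
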